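/- Kantorovich–Rubinstein duality for Δ: let ⟨S, π⟩ be a probabilistic transition system, d a 1-bounded pseudometric on S, and s₁, s₂ ∈ S states with ∑_s π(s₁,s) = 1 and ∑_s π(s₂,s) = 1. Then Δ(d)(s₁,s₂) equals the minimum, over all couplings μ : S × S → [0,1] satisfying ∑_{s_i∈S} μ(s_i,s_j) = π(s₁,s_j) for each s_j and ∑_{s_j∈S} μ(s_i,s_j) = π(s₂,s_i) for each s_i, of ∑_{(s_i,s_j)∈S×S} d(s_i,s_j)·μ(s_i,s_j). -/

import Mathlib

open scoped Classical
open Finset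

/-- A probabilistic transition system on a finite state set `S`:
`prob s s'` is the probability of a transition from `s` to `s'`;
each row sums to `0` or `1`. -/
structure PTS (S : Type) [Fintype S] where
  prob : S → S → ℝ
  nonneg : ∀ s s', 0 ≤ prob s s'
  le_one : ∀ s s', prob s s' ≤ 1
  sum01 : ∀ s, (∑ s', prob s s') = 0 ∨ (∑ s', prob s s') = 1

/-- The logic `L`: `true`, diamond, conjunction, negation and `φ ⊖ q` with `q ∈ [0,1] ∩ ℚ`. -/
inductive Formula : Type where
  | tt : Formula
  | diam : Formula → Formula
  | conj : Formula → Formula → Formula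
  | neg : Formula → Formula
  | sub : Formula → {q : ℚ // 0 ≤ q ∧ q ≤ 1} → Formula

variable {S : Type} [Fintype S]

/-- The real-valued interpretation `⟦φ⟧_δ` of a formula. -/
noncomputable def interp (M : PTS S) (δ : ℝ) : Formula → S → ℝ
  | .tt, _ => 1
  | .diam φ, s => δ * ∑ s', M.prob s s' * interp M δ φ s'
  | .conj φ ψ, s => min (interp M δ φ s) (interp M δ ψ s)
  | .neg φ, s => 1 - interp M δ φ s
  | .sub φ q, s => max (interp M δ φ s - ((q : ℚ) : ℝ)) 0

/-- The behavioural distance `d_δ(s₁,s₂) = sup_{φ ∈ L} ⟦φ⟧_δ(s₁) − ⟦φ⟧_δ(s₂)`. -/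
noncomputable def pdist (M : PTS S) (δ : ℝ) (s₁ s₂ : S) : ℝ :=
  ⨆ φ : Formula, (interp M δ φ s₁ - interp M δ φ s₂)

/-- `d` is a 1-bounded pseudometric on `S`. -/
def IsPseudo (d : S → S → ℝ) : Prop :=
  (∀ s₁ s₂, 0 ≤ d s₁ s₂ ∧ d s₁ s₂ ≤ 1) ∧ (∀ s, d s s = 0) ∧
  (∀ s₁ s₂, d s₁ s₂ = d s₂ s₁) ∧ (∀ s₁ s₂ s₃, d s₁ s₃ ≤ d s₁ s₂ + d s₂ s₃)

/-- The order `⊑` on 1-bounded pseudometrics: `d₁ ⊑ d₂` iff `d₁ ≥ d₂` pointwise. -/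
def ple (d₁ d₂ : S → S → ℝ) : Prop := ∀ s₁ s₂, d₂ s₁ s₂ ≤ d₁ s₁ s₂

/-- `f : S → [0,1]` is nonexpansive with respect to `d`. -/
def Nonexp (d : S → S → ℝ) (f : S → ℝ) : Prop :=
  (∀ s, 0 ≤ f s ∧ f s ≤ 1) ∧ ∀ s₁ s₂, |f s₁ - f s₂| ≤ d s₁ s₂

/-- The functional `Δ` on 1-bounded pseudometrics. -/
noncomputable def Delta (M : PTS S) (d : S → S → ℝ) (s₁ s₂ : S) : ℝ :=
  if (∑ s, M.prob s₁ s) = 1 ∧ (∑ s, M.prob s₂ s) = 1 then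
    sSup {x : ℝ | ∃ f : S → ℝ, Nonexp d f ∧ x = ∑ s, f s * (M.prob s₁ s - M.prob s₂ s)}
  else if (∑ s, M.prob s₁ s) = 0 ∧ (∑ s, M.prob s₂ s) = 0 then 0
  else 1

/-- `R` is a probabilistic bisimulation on `M`. -/
def IsBisim (M : PTS S) (R : S → S → Prop) : Prop :=
  Equivalence R ∧ ∀ s₁ s₂, R s₁ s₂ → ∀ e : S,
    (∑ s, if R e s then M.prob s₁ s else 0) = (∑ s, if R e s then M.prob s₂ s else 0)

/-- `s₁` and `s₂` are probabilistic bisimilar. -/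
def Bisimilar (M : PTS S) (s₁ s₂ : S) : Prop := ∃ R, IsBisim M R ∧ R s₁ s₂

/-- The modal depth of a formula. -/
def Formula.depth : Formula → ℕ
  | .tt => 0
  | .diam φ => φ.depth + 1
  | .conj φ ψ => max φ.depth ψ.depth
  | .neg φ => φ.depth
  | .sub φ _ => φ.depth

/-- The ratio `ρ(d₁,d₂) = min { d₂(s₁,s₂)/d₁(s₁,s₂) | d₂(s₁,s₂) > 0 }`,
with the minimum of the empty set taken to be `1`. -/
noncomputable def rho (d₁ d₂ : S → S → ℝ) : ℝ :=
  if {x : ℝ | ∃ s₁ s₂, 0 < d₂ s₁ s₂ ∧ x = d₂ s₁ s₂ / d₁ s₁ s₂}.Nonempty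
  then sInf {x : ℝ | ∃ s₁ s₂, 0 < d₂ s₁ s₂ ∧ x = d₂ s₁ s₂ / d₁ s₁ s₂} else 1

/-- `μ = min { d(s₁,s₂) | d(s₁,s₂) > 0 }`, with the minimum of the empty set taken to be `1`. -/
noncomputable def muMin (d : S → S → ℝ) : ℝ :=
  if {x : ℝ | ∃ s₁ s₂, 0 < d s₁ s₂ ∧ x = d s₁ s₂}.Nonempty
  then sInf {x : ℝ | ∃ s₁ s₂, 0 < d s₁ s₂ ∧ x = d s₁ s₂} else 1

/-- The iterates `d⁰ = ⊤`, `d^{n+1} = Δ(d^n)`. -/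
noncomputable def iterd (M : PTS S) : ℕ → S → S → ℝ
  | 0 => fun _ _ => 0
  | n + 1 => Delta M (iterd M n)

/-- The termination probabilities `τₙ`. -/
noncomputable def term (M : PTS S) : ℕ → S → ℝ
  | 0, _ => 0
  | n + 1, s => if (∑ s', M.prob s s') = 0 then 1 else ∑ s', M.prob s s' * term M n s'


section KRaux
open Filter Topology

/-- The set of coupling costs. -/
def KRB (d : S → S → ℝ) (π₁ π₂ : S → ℝ) : Set ℝ :=
  {x : ℝ | ∃ μ : S → S → ℝ,
      (∀ i j, 0 ≤ μ i j ∧ μ i j ≤ 1) ∧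
      (∀ j, (∑ i, μ i j) = π₁ j) ∧
      (∀ i, (∑ j, μ i j) = π₂ i) ∧
      x = ∑ i, ∑ j, d i j * μ i j}

lemma KRB_nonempty (d : S → S → ℝ) (π₁ π₂ : S → ℝ)
    (h10 : ∀ s, 0 ≤ π₁ s) (h20 : ∀ s, 0 ≤ π₂ s)
    (h1 : ∑ s, π₁ s = 1) (h2 : ∑ s, π₂ s = 1) : (KRB d π₁ π₂).Nonempty := by
  have hle1 : ∀ s, π₁ s ≤ 1 := by
    intro s
    calc π₁ s ≤ ∑ s', π₁ s' := Finset.single_le_sum (fun i _ => h10 i) (mem_univ s)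
    _ = 1 := h1
  have hle2 : ∀ s, π₂ s ≤ 1 := by
    intro s
    calc π₂ s ≤ ∑ s', π₂ s' := Finset.single_le_sum (fun i _ => h20 i) (mem_univ s)
    _ = 1 := h2
  refine ⟨_, fun i j => π₂ i * π₁ j, fun i j => ⟨mul_nonneg (h20 i) (h10 j),
    mul_le_one₀ (hle2 i) (h10 j) (hle1 j)⟩, ?_, ?_, rfl⟩
  · intro j; rw [← Finset.sum_mul, h2, one_mul]
  · intro i; rw [← Finset.mul_sum, h1, mul_one]

lemma KRB_bddBelow (d : S → S → ℝ) (hd0 : ∀ i j, 0 ≤ d i j) (π₁ π₂ : S → ℝ) :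
    BddBelow (KRB d π₁ π₂) := by
  refine ⟨0, fun x hx => ?_⟩
  obtain ⟨μ, hμ, -, -, rfl⟩ := hx
  exact Finset.sum_nonneg fun i _ => Finset.sum_nonneg fun j _ =>
    mul_nonneg (hd0 i j) (hμ i j).1

lemma weak_dual (d : S → S → ℝ) (hd : IsPseudo d) (π₁ π₂ : S → ℝ)
    {f : S → ℝ} (hf : Nonexp d f) {y : ℝ} (hy : y ∈ KRB d π₁ π₂) :
    ∑ s, f s * (π₁ s - π₂ s) ≤ y := by
  obtain ⟨μ, hμ, hm1, hm2, rfl⟩ := hy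
  have key : ∑ s, f s * (π₁ s - π₂ s) = ∑ i, ∑ j, (f j - f i) * μ i j := by
    simp_rw [mul_sub, Finset.sum_sub_distrib, sub_mul, Finset.sum_sub_distrib]
    congr 1
    · rw [Finset.sum_comm]
      refine Finset.sum_congr rfl fun j _ => ?_
      rw [← hm1 j, Finset.mul_sum]
    · refine Finset.sum_congr rfl fun i _ => ?_
      rw [← hm2 i, Finset.mul_sum]
  rw [key]
  refine Finset.sum_le_sum fun i _ => Finset.sum_le_sum fun j _ => ?_
  have h1 : f j - f i ≤ d i j := by
    have := hf.2 j i
    rw [hd.2.2.1 j i] at this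
    exact (le_abs_self _).trans this
  exact mul_le_mul_of_nonneg_right h1 (hμ i j).1 |>.trans
    (mul_le_mul_of_nonneg_right le_rfl (hμ i j).1)

def KRcone (d : S → S → ℝ) : Set ((S → ℝ) × (S → ℝ) × ℝ) :=
  {z | ∃ μ : S → S → ℝ, (∀ i j, 0 ≤ μ i j) ∧
      (∀ j, (∑ i, μ i j) = z.1 j) ∧ (∀ i, (∑ j, μ i j) = z.2.1 i) ∧
      (∑ i, ∑ j, d i j * μ i j) ≤ z.2.2}

lemma KRcone_convex (d : S → S → ℝ) : Convex ℝ (KRcone d) := by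
  rintro z ⟨μ, hμ0, hμ1, hμ2, hμ3⟩ w ⟨ν, hν0, hν1, hν2, hν3⟩ a b ha hb hab
  refine ⟨fun i j => a * μ i j + b * ν i j,
    fun i j => add_nonneg (mul_nonneg ha (hμ0 i j)) (mul_nonneg hb (hν0 i j)),
    fun j => ?_, fun i => ?_, ?_⟩
  · simp [Finset.sum_add_distrib, ← Finset.mul_sum, hμ1 j, hν1 j]
  · simp [Finset.sum_add_distrib, ← Finset.mul_sum, hμ2 i, hν2 i]
  · have : ∑ i, ∑ j, d i j * (a * μ i j + b * ν i j)
        = a * (∑ i, ∑ j, d i j * μ i j) + b * (∑ i, ∑ j, d i j * ν i j) := by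
      rw [Finset.mul_sum, Finset.mul_sum, ← Finset.sum_add_distrib]
      refine Finset.sum_congr rfl fun i _ => ?_
      rw [Finset.mul_sum, Finset.mul_sum, ← Finset.sum_add_distrib]
      exact Finset.sum_congr rfl fun j _ => by ring
    rw [this]
    exact add_le_add (mul_le_mul_of_nonneg_left hμ3 ha) (mul_le_mul_of_nonneg_left hν3 hb)

lemma KRcone_smul (d : S → S → ℝ) {z} (hz : z ∈ KRcone d) {c : ℝ} (hc : 0 ≤ c) :
    c • z ∈ KRcone d := by
  obtain ⟨μ, h0, h1, h2, h3⟩ := hz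
  refine ⟨fun i j => c * μ i j, fun i j => mul_nonneg hc (h0 i j), fun j => ?_, fun i => ?_, ?_⟩
  · simp [← Finset.mul_sum, h1 j]
  · simp [← Finset.mul_sum, h2 i]
  · have : ∑ i, ∑ j, d i j * (c * μ i j) = c * ∑ i, ∑ j, d i j * μ i j := by
      rw [Finset.mul_sum]
      refine Finset.sum_congr rfl fun i _ => ?_
      rw [Finset.mul_sum]
      exact Finset.sum_congr rfl fun j _ => by ring
    rw [this]
    exact mul_le_mul_of_nonneg_left h3 hc

lemma KRcone_zero (d : S → S → ℝ) : (0 : (S → ℝ) × (S → ℝ) × ℝ) ∈ KRcone d :=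
  ⟨fun _ _ => 0, fun _ _ => le_rfl, by simp, by simp, by simp⟩

lemma KRcone_unit (d : S → S → ℝ) : ((0, 0, 1) : (S → ℝ) × (S → ℝ) × ℝ) ∈ KRcone d :=
  ⟨fun _ _ => 0, fun _ _ => le_rfl, by simp, by simp, by simp⟩

lemma KRcone_point (d : S → S → ℝ) (i j : S) :
    ((Pi.single j 1, Pi.single i 1, d i j) : (S → ℝ) × (S → ℝ) × ℝ) ∈ KRcone d := by
  refine ⟨fun i' j' => (if i' = i then 1 else 0) * (if j' = j then 1 else 0),
    fun i' j' => by positivity, fun j' => ?_, fun i' => ?_, ?_⟩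
  · simp [← Finset.sum_mul, Pi.single_apply, eq_comm]
  · simp [← Finset.mul_sum, Pi.single_apply, eq_comm]
  · have : ∀ i', ∑ j', d i' j' * ((if i' = i then (1:ℝ) else 0) * (if j' = j then 1 else 0))
        = if i' = i then d i' j else 0 := by
      intro i'
      by_cases h : i' = i <;> simp [h, mul_comm, Finset.sum_ite_eq' univ j (fun j' => d i' j')]
    simp only [this]
    simp

lemma not_mem_closure_KRcone (d : S → S → ℝ) (π₁ π₂ : S → ℝ)
    (h10 : ∀ s, 0 ≤ π₁ s) (h1 : ∑ s, π₁ s = 1)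
    {ε : ℝ} (hε : 0 < ε) (hB : BddBelow (KRB d π₁ π₂)) :
    ((π₁, π₂, sInf (KRB d π₁ π₂) - ε) : (S → ℝ) × (S → ℝ) × ℝ) ∉ closure (KRcone d) := by
  set P := sInf (KRB d π₁ π₂) with hP
  intro hmem
  rw [mem_closure_iff_seq_limit] at hmem
  obtain ⟨z, hz, hlim⟩ := hmem
  simp only [KRcone, Set.mem_setOf_eq] at hz
  choose μ hμ0 hμ1 hμ2 hμ3 using hz
  have hlim1 : Tendsto (fun n => (z n).1) atTop (𝓝 π₁) :=
    (continuous_fst.tendsto _).comp hlim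
  have hlim2 : Tendsto (fun n => (z n).2.1) atTop (𝓝 π₂) :=
    ((continuous_fst.tendsto _).comp ((continuous_snd.tendsto _).comp hlim))
  have hlim3 : Tendsto (fun n => (z n).2.2) atTop (𝓝 (P - ε)) :=
    ((continuous_snd.tendsto _).comp ((continuous_snd.tendsto _).comp hlim))
  have hσ : Tendsto (fun n => ∑ j, (z n).1 j) atTop (𝓝 1) := by
    rw [← h1]
    exact tendsto_finset_sum _ fun j _ => ((continuous_apply j).tendsto _).comp hlim1
  obtain ⟨N, hN⟩ := eventually_atTop.mp
    (hσ.eventually (Filter.Tendsto.eventually_lt_const (by norm_num : (1:ℝ) < 2) tendsto_id))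
  -- shifted sequence, entrywise bounded by 2
  have hshift : Tendsto (fun n : ℕ => n + N) atTop atTop := tendsto_add_atTop_nat N
  have hbound : ∀ n i j, μ (n + N) i j ∈ Set.Icc (0:ℝ) 2 := by
    intro n i j
    refine ⟨hμ0 _ i j, ?_⟩
    calc μ (n + N) i j ≤ ∑ i', μ (n + N) i' j :=
          Finset.single_le_sum (fun i' _ => hμ0 _ i' j) (mem_univ i)
    _ = (z (n + N)).1 j := hμ1 _ j
    _ ≤ ∑ j', (z (n + N)).1 j' := by
          refine Finset.single_le_sum (fun j' _ => ?_) (mem_univ j)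
          rw [← hμ1 _ j']
          exact Finset.sum_nonneg fun i' _ => hμ0 _ i' j'
    _ ≤ 2 := (hN _ (Nat.le_add_left N n)).le
  have hcpt : IsCompact (Set.univ.pi fun _ : S => Set.univ.pi fun _ : S => Set.Icc (0:ℝ) 2) :=
    isCompact_univ_pi fun _ => isCompact_univ_pi fun _ => isCompact_Icc
  have hmemT : ∀ n, μ (n + N) ∈ (Set.univ.pi fun _ : S => Set.univ.pi fun _ : S => Set.Icc (0:ℝ) 2) := by
    intro n
    rw [Set.mem_univ_pi]
    intro i
    rw [Set.mem_univ_pi]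
    intro j
    exact hbound n i j
  obtain ⟨μ', _, φ, hφ, hφlim⟩ := hcpt.tendsto_subseq hmemT
  -- coordinatewise limits
  have hcoord : ∀ i j, Tendsto (fun n => μ (φ n + N) i j) atTop (𝓝 (μ' i j)) := by
    intro i j
    exact ((continuous_apply j).tendsto _).comp (((continuous_apply i).tendsto _).comp hφlim)
  have hφshift : Tendsto (fun n => φ n + N) atTop atTop :=
    hshift.comp hφ.tendsto_atTop
  -- μ' is a coupling with cost ≤ P - ε
  have hm1 : ∀ j, (∑ i, μ' i j) = π₁ j := by
    intro j
    have t1 : Tendsto (fun n => ∑ i, μ (φ n + N) i j) atTop (𝓝 (∑ i, μ' i j)) :=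
      tendsto_finset_sum _ fun i _ => hcoord i j
    have t2 : Tendsto (fun n => ∑ i, μ (φ n + N) i j) atTop (𝓝 (π₁ j)) := by
      have := (((continuous_apply j).tendsto _).comp hlim1).comp hφshift
      simpa only [Function.comp_def, hμ1] using this
    exact tendsto_nhds_unique t1 t2
  have hm2 : ∀ i, (∑ j, μ' i j) = π₂ i := by
    intro i
    have t1 : Tendsto (fun n => ∑ j, μ (φ n + N) i j) atTop (𝓝 (∑ j, μ' i j)) :=
      tendsto_finset_sum _ fun j _ => hcoord i j
    have t2 : Tendsto (fun n => ∑ j, μ (φ n + N) i j) atTop (𝓝 (π₂ i)) := by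
      have := (((continuous_apply i).tendsto _).comp hlim2).comp hφshift
      simpa only [Function.comp_def, hμ2] using this
    exact tendsto_nhds_unique t1 t2
  have h0 : ∀ i j, 0 ≤ μ' i j := fun i j => ge_of_tendsto' (hcoord i j) fun n => hμ0 _ i j
  have hle1 : ∀ s, π₁ s ≤ 1 := by
    intro s
    calc π₁ s ≤ ∑ s', π₁ s' := Finset.single_le_sum (fun i _ => h10 i) (mem_univ s)
    _ = 1 := h1
  have h0' : ∀ i j, μ' i j ≤ 1 := by
    intro i j
    calc μ' i j ≤ ∑ i', μ' i' j := Finset.single_le_sum (fun i' _ => h0 i' j) (mem_univ i)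
    _ = π₁ j := hm1 j
    _ ≤ 1 := hle1 j
  have hcost : (∑ i, ∑ j, d i j * μ' i j) ≤ P - ε := by
    have t1 : Tendsto (fun n => ∑ i, ∑ j, d i j * μ (φ n + N) i j) atTop
        (𝓝 (∑ i, ∑ j, d i j * μ' i j)) :=
      tendsto_finset_sum _ fun i _ => tendsto_finset_sum _ fun j _ =>
        (hcoord i j).const_mul _
    have t2 : Tendsto (fun n => (z (φ n + N)).2.2) atTop (𝓝 (P - ε)) := hlim3.comp hφshift
    exact le_of_tendsto_of_tendsto' t1 t2 fun n => hμ3 _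
  have hPmem : (∑ i, ∑ j, d i j * μ' i j) ∈ KRB d π₁ π₂ :=
    ⟨μ', fun i j => ⟨h0 i j, h0' i j⟩, hm1, hm2, rfl⟩
  have := csInf_le hB hPmem
  linarith

lemma dual_exists (d : S → S → ℝ) (π₁ π₂ : S → ℝ)
    (h10 : ∀ s, 0 ≤ π₁ s) (h20 : ∀ s, 0 ≤ π₂ s)
    (h1 : ∑ s, π₁ s = 1) (h2 : ∑ s, π₂ s = 1)
    {ε : ℝ} (hε : 0 < ε) (hB : BddBelow (KRB d π₁ π₂)) :
    ∃ A B : S → ℝ, (∀ i j, A j + B i ≤ d i j) ∧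
      sInf (KRB d π₁ π₂) - ε < ∑ j, π₁ j * A j + ∑ i, π₂ i * B i := by
  set P := sInf (KRB d π₁ π₂) with hP
  obtain ⟨g, u, hgp, hgK⟩ := geometric_hahn_banach_point_closed
    ((KRcone_convex d).closure) isClosed_closure
    (not_mem_closure_KRcone d π₁ π₂ h10 h1 hε hB)
  have hK : ∀ z ∈ KRcone d, u < g z := fun z hz => hgK z (subset_closure hz)
  have hu0 : u < 0 := by simpa using hK _ (KRcone_zero d)
  have hKnn : ∀ z ∈ KRcone d, 0 ≤ g z := by
    intro z hz
    by_contra hneg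
    push_neg at hneg
    have hc : 0 ≤ u / g z := by
      rw [div_nonneg_iff]; exact Or.inr ⟨hu0.le, hneg.le⟩
    have := hK _ (KRcone_smul d hz hc)
    rw [map_smul, smul_eq_mul, div_mul_cancel₀ u hneg.ne] at this
    exact lt_irrefl u this
  set a : S → ℝ := fun j => g (Pi.single j 1, 0, 0) with ha
  set b : S → ℝ := fun i => g (0, Pi.single i 1, 0) with hb
  set s : ℝ := g (0, 0, 1) with hs
  have hs0 : 0 ≤ s := hKnn _ (KRcone_unit d)
  have hpoint : ∀ i j, 0 ≤ a j + b i + d i j * s := by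
    intro i j
    have h := hKnn _ (KRcone_point d i j)
    have hdec : ((Pi.single j 1, Pi.single i 1, d i j) : (S → ℝ) × (S → ℝ) × ℝ)
        = (Pi.single j 1, 0, 0) + (0, Pi.single i 1, 0) + d i j • (0, 0, 1) := by
      ext <;> simp
    rw [hdec, map_add, map_add, map_smul, smul_eq_mul] at h
    simpa [ha, hb, hs, mul_comm] using h
  -- decomposition of g at the separating point
  have hdecP : ∀ t : ℝ, g (π₁, π₂, t) = ∑ j, π₁ j * a j + ∑ i, π₂ i * b i + t * s := by
    intro t
    have hdec : ((π₁, π₂, t) : (S → ℝ) × (S → ℝ) × ℝ)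
        = (∑ j, π₁ j • ((Pi.single j 1, 0, 0) : (S → ℝ) × (S → ℝ) × ℝ))
          + (∑ i, π₂ i • ((0, Pi.single i 1, 0) : (S → ℝ) × (S → ℝ) × ℝ))
          + t • (0, 0, 1) := by
      ext x
      · simp [Prod.fst_sum, Finset.sum_apply, Pi.single_apply, Finset.sum_ite_eq]
      · simp [Prod.fst_sum, Prod.snd_sum, Finset.sum_apply, Pi.single_apply, Finset.sum_ite_eq]
      · simp [Prod.snd_sum]
    rw [hdec, map_add, map_add, map_sum, map_sum, map_smul]
    simp only [map_smul, smul_eq_mul]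
    rfl
  have hgp' : g (π₁, π₂, P - ε) < 0 := hgp.trans hu0
  rw [hdecP] at hgp'
  set Va := ∑ j, π₁ j * a j
  set Vb := ∑ i, π₂ i * b i
  have hspos : 0 < s := by
    rcases hs0.lt_or_eq with h | h
    · exact h
    · exfalso
      have hab : ∀ i j, 0 ≤ a j + b i := by
        intro i j; have := hpoint i j; rw [← h] at this; linarith [this]
      have hVa : Va = ∑ i, ∑ j, π₂ i * π₁ j * a j := by
        rw [Finset.sum_comm]
        refine Finset.sum_congr rfl fun j _ => ?_
        rw [← Finset.sum_mul, ← Finset.sum_mul, h2, one_mul]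
      have hVb : Vb = ∑ i, ∑ j, π₂ i * π₁ j * b i := by
        refine Finset.sum_congr rfl fun i _ => ?_
        rw [show (∑ j, π₂ i * π₁ j * b i) = (∑ j, π₁ j) * (π₂ i * b i) from by
          rw [Finset.sum_mul]; exact Finset.sum_congr rfl fun j _ => by ring, h1, one_mul]
      have hge : 0 ≤ Va + Vb := by
        rw [hVa, hVb, ← Finset.sum_add_distrib]
        refine Finset.sum_nonneg fun i _ => ?_
        rw [← Finset.sum_add_distrib]
        refine Finset.sum_nonneg fun j _ => ?_
        have := hab i j
        have := mul_nonneg (h20 i) (h10 j)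
        nlinarith [hab i j, mul_nonneg (h20 i) (h10 j)]
      rw [← h, mul_zero, add_zero] at hgp'
      linarith
  refine ⟨fun j => -(a j) / s, fun i => -(b i) / s, fun i j => ?_, ?_⟩
  · rw [← add_div, div_le_iff₀ hspos]
    have := hpoint i j
    nlinarith
  · have e1 : ∑ j, π₁ j * (-(a j) / s) = -Va / s := by
      rw [eq_div_iff hspos.ne', Finset.sum_mul, ← Finset.sum_neg_distrib]
      exact Finset.sum_congr rfl fun j _ => by field_simp
    have e2 : ∑ i, π₂ i * (-(b i) / s) = -Vb / s := by
      rw [eq_div_iff hspos.ne', Finset.sum_mul, ← Finset.sum_neg_distrib]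
      exact Finset.sum_congr rfl fun i _ => by field_simp
    rw [e1, e2, ← add_div, lt_div_iff₀ hspos]
    nlinarith [hgp']

lemma dual_to_nonexp [Nonempty S] (d : S → S → ℝ) (hd : IsPseudo d) (π₁ π₂ : S → ℝ)
    (h10 : ∀ s, 0 ≤ π₁ s) (h20 : ∀ s, 0 ≤ π₂ s)
    (h1 : ∑ s, π₁ s = 1) (h2 : ∑ s, π₂ s = 1)
    (A B : S → ℝ) (hAB : ∀ i j, A j + B i ≤ d i j) :
    ∃ f : S → ℝ, Nonexp d f ∧
      ∑ j, π₁ j * A j + ∑ i, π₂ i * B i ≤ ∑ s, f s * (π₁ s - π₂ s) := by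
  set f₀ : S → ℝ := fun j => univ.inf' univ_nonempty (fun i => d i j - B i) with hf₀
  have hA : ∀ j, A j ≤ f₀ j :=
    fun j => Finset.le_inf' _ _ fun i _ => by linarith [hAB i j]
  have hBle : ∀ i, f₀ i ≤ -B i := by
    intro i
    have := Finset.inf'_le (fun i' => d i' i - B i') (mem_univ i)
    rwa [hd.2.1 i, zero_sub] at this
  have hlip : ∀ j j', f₀ j ≤ f₀ j' + d j' j := by
    intro j j'
    obtain ⟨i', -, hi'⟩ := Finset.exists_mem_eq_inf' univ_nonempty (fun i => d i j' - B i)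
    calc f₀ j ≤ d i' j - B i' := Finset.inf'_le _ (mem_univ i')
    _ ≤ (d i' j' + d j' j) - B i' := by linarith [hd.2.2.2 i' j' j]
    _ = f₀ j' + d j' j := by
        have : f₀ j' = d i' j' - B i' := hi'
        rw [this]; ring
  have hne : ∀ j j', |f₀ j - f₀ j'| ≤ d j j' := by
    intro j j'
    rw [abs_sub_le_iff]
    constructor
    · have := hlip j j'; rw [hd.2.2.1 j' j] at this; linarith
    · linarith [hlip j' j]
  obtain ⟨j₀, -, hj₀⟩ := Finset.exists_mem_eq_inf' (univ_nonempty (α := S)) f₀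
  set m : ℝ := univ.inf' univ_nonempty f₀ with hm
  set f : S → ℝ := fun j => f₀ j - m with hf
  refine ⟨f, ⟨fun s => ⟨?_, ?_⟩, fun s₁ s₂ => ?_⟩, ?_⟩
  · have : m ≤ f₀ s := Finset.inf'_le _ (mem_univ s)
    simp [hf]; linarith
  · have : |f₀ s - f₀ j₀| ≤ d s j₀ := hne s j₀
    have hd1 := (hd.1 s j₀).2
    rw [abs_sub_le_iff] at this
    simp only [hf, hm, hj₀]
    linarith [this.1]
  · simpa [hf] using hne s₁ s₂
  · have key : ∑ s, f s * (π₁ s - π₂ s)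
        = (∑ s, f₀ s * π₁ s) - (∑ s, f₀ s * π₂ s) - m * ((∑ s, π₁ s) - (∑ s, π₂ s)) := by
      rw [mul_sub, Finset.mul_sum, Finset.mul_sum]
      rw [show ∑ s, f s * (π₁ s - π₂ s) = ∑ s, (f₀ s * π₁ s - f₀ s * π₂ s - (m * π₁ s - m * π₂ s))
        from Finset.sum_congr rfl fun s _ => by simp only [hf]; ring]
      rw [Finset.sum_sub_distrib, Finset.sum_sub_distrib, Finset.sum_sub_distrib]
    rw [key, h1, h2, sub_self, mul_zero, sub_zero]
    have e1 : ∑ j, π₁ j * A j ≤ ∑ s, f₀ s * π₁ s := by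
      refine Finset.sum_le_sum fun j _ => ?_
      rw [mul_comm (f₀ j)]
      exact mul_le_mul_of_nonneg_left (hA j) (h10 j)
    have e2 : ∑ i, π₂ i * B i ≤ - ∑ s, f₀ s * π₂ s := by
      rw [← Finset.sum_neg_distrib]
      refine Finset.sum_le_sum fun i _ => ?_
      have : B i ≤ -f₀ i := by linarith [hBle i]
      calc π₂ i * B i ≤ π₂ i * (-f₀ i) := mul_le_mul_of_nonneg_left this (h20 i)
      _ = -(f₀ i * π₂ i) := by ring
    linarith

end KRaux

/-- Kantorovich–Rubinstein duality for `Δ`: for states with outgoing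
transitions, `Δ(d)(s₁,s₂)` equals the minimum over all couplings `μ` of
`π(s₁,·)` and `π(s₂,·)` of `∑ d(s_i,s_j)·μ(s_i,s_j)`. -/
theorem stmt11 (S : Type) [Fintype S] (M : PTS S) (d : S → S → ℝ) (hd : IsPseudo d)
    (s₁ s₂ : S) (h₁ : (∑ s, M.prob s₁ s) = 1) (h₂ : (∑ s, M.prob s₂ s) = 1) :
    Delta M d s₁ s₂
      = sInf {x : ℝ | ∃ μ : S → S → ℝ,
          (∀ i j, 0 ≤ μ i j ∧ μ i j ≤ 1) ∧
          (∀ j, (∑ i, μ i j) = M.prob s₁ j) ∧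
          (∀ i, (∑ j, μ i j) = M.prob s₂ i) ∧
          x = ∑ i, ∑ j, d i j * μ i j} := by
  have hne : Nonempty S := by
    by_contra h
    rw [not_nonempty_iff] at h
    simp [Finset.univ_eq_empty] at h₁
  set π₁ : S → ℝ := M.prob s₁ with hπ₁
  set π₂ : S → ℝ := M.prob s₂ with hπ₂
  have h10 : ∀ s, 0 ≤ π₁ s := fun s => M.nonneg s₁ s
  have h20 : ∀ s, 0 ≤ π₂ s := fun s => M.nonneg s₂ s
  have hd0 : ∀ i j, 0 ≤ d i j := fun i j => (hd.1 i j).1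
  have hset : {x : ℝ | ∃ μ : S → S → ℝ,
          (∀ i j, 0 ≤ μ i j ∧ μ i j ≤ 1) ∧
          (∀ j, (∑ i, μ i j) = M.prob s₁ j) ∧
          (∀ i, (∑ j, μ i j) = M.prob s₂ i) ∧
          x = ∑ i, ∑ j, d i j * μ i j} = KRB d π₁ π₂ := rfl
  rw [hset, Delta, if_pos ⟨h₁, h₂⟩]
  set Aset : Set ℝ :=
    {x : ℝ | ∃ f : S → ℝ, Nonexp d f ∧ x = ∑ s, f s * (M.prob s₁ s - M.prob s₂ s)} with hAset
  have hBne : (KRB d π₁ π₂).Nonempty := KRB_nonempty d π₁ π₂ h10 h20 h₁ h₂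
  have hBbd : BddBelow (KRB d π₁ π₂) := KRB_bddBelow d hd0 π₁ π₂
  have hAne : Aset.Nonempty := by
    refine ⟨∑ s, (0:ℝ) * (π₁ s - π₂ s), fun _ => 0, ⟨fun s => ⟨le_rfl, zero_le_one⟩,
      fun s t => by simpa using hd0 s t⟩, rfl⟩
  obtain ⟨y₀, hy₀⟩ := id hBne
  have hAbd : BddAbove Aset := by
    refine ⟨y₀, fun x hx => ?_⟩
    obtain ⟨f, hf, rfl⟩ := hx
    exact weak_dual d hd π₁ π₂ hf hy₀
  refine le_antisymm ?_ ?_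
  · refine csSup_le hAne fun x hx => ?_
    obtain ⟨f, hf, rfl⟩ := hx
    exact le_csInf hBne fun y hy => weak_dual d hd π₁ π₂ hf hy
  · refine le_of_forall_pos_le_add fun ε hε => ?_
    obtain ⟨A, B, hAB, hval⟩ := dual_exists d π₁ π₂ h10 h20 h₁ h₂ hε hBbd
    obtain ⟨f, hf, hfv⟩ := dual_to_nonexp d hd π₁ π₂ h10 h20 h₁ h₂ A B hAB
    have hmem : (∑ s, f s * (π₁ s - π₂ s)) ∈ Aset := ⟨f, hf, rfl⟩
    have := le_csSup hAbd hmem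
    linarith
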